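/- Let m, n, k be positive integers with k ≤ n and let X ∈ M_m ⊗ M_n be Hermitian. Then the following are equivalent: (i) for every N ∈ ℕ and every family A_1,…,A_N ∈ M_{k,n} with ∑_{i=1}^N A_i A_i^* = I_k, the matrix ∑_{i=1}^N (I_m ⊗ A_i) X (I_m ⊗ A_i^*) ∈ M_m ⊗ M_k is positive semidefinite; (ii) X is k-block positive. (This is Theorem 4.3(a): the cone C_m^{min,k} of the k-super minimal operator system on M_n is exactly the cone of k-block positive operators.) -/

import Mathlib

open scoped ComplexOrder Kronecker
open Matrix

noncomputable section

/-- The standard inner product `⟨v, w⟩ = ∑ conj(vᵢ) wᵢ` on `I → ℂ`. -/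
def inprod {I : Type*} [Fintype I] (v w : I → ℂ) : ℂ :=
  ∑ i, (starRingEnd ℂ) (v i) * w i

/-- `v` is a unit vector. -/
def UnitVec {I : Type*} [Fintype I] (v : I → ℂ) : Prop :=
  inprod v v = 1

/-- The Schmidt rank of a vector in `ℂ^I ⊗ ℂ^J`, i.e. the rank of the associated
`I × J` coefficient matrix. -/
noncomputable def SchmidtRank {I J : Type*} [Fintype I] [Fintype J] (v : I × J → ℂ) : ℕ :=
  (Matrix.of fun i j => v (i, j)).rank

/-- The operator norm (largest singular value) of a matrix, as
`sup { |⟨v, A w⟩| : v, w unit vectors }`. -/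
noncomputable def opNorm {I J : Type*} [Fintype I] [Fintype J] (A : Matrix I J ℂ) : ℝ :=
  sSup { t : ℝ | ∃ v w, UnitVec v ∧ UnitVec w ∧ t = ‖inprod v (A.mulVec w)‖ }

/-- The `S(k)`-norm of `X ∈ M_I ⊗ M_J`. -/
noncomputable def SNorm {I J : Type*} [Fintype I] [Fintype J] (k : ℕ)
    (X : Matrix (I × J) (I × J) ℂ) : ℝ :=
  sSup { t : ℝ | ∃ v w : I × J → ℂ, UnitVec v ∧ UnitVec w ∧
    SchmidtRank v ≤ k ∧ SchmidtRank w ≤ k ∧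
    t = ‖inprod v (X.mulVec w)‖ }

/-- `X` is a `k`-block positive (Hermitian) operator: `⟨v, X v⟩ ≥ 0` for every
vector of Schmidt rank at most `k`. -/
def kBlockPos {I J : Type*} [Fintype I] [Fintype J] (k : ℕ)
    (X : Matrix (I × J) (I × J) ℂ) : Prop :=
  X.IsHermitian ∧ ∀ v : I × J → ℂ, SchmidtRank v ≤ k → 0 ≤ inprod v (X.mulVec v)

/-- `ρ` has Schmidt number at most `k` (in particular it is positive semidefinite):
it is a finite nonnegative combination of rank-one projections onto vectors of
Schmidt rank at most `k`. -/
def SchmidtNumberLE {I J : Type*} [Fintype I] [Fintype J] (k : ℕ)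
    (ρ : Matrix (I × J) (I × J) ℂ) : Prop :=
  ∃ (N : ℕ) (c : Fin N → ℝ) (v : Fin N → (I × J → ℂ)),
    (∀ i, 0 ≤ c i) ∧ (∀ i, SchmidtRank (v i) ≤ k) ∧
    ρ = ∑ i, (c i : ℂ) • Matrix.vecMulVec (v i) (star (v i))

/-- `id_I ⊗ Φ` : the map applying `Φ` to the second tensor factor. -/
noncomputable def tensorId {I : Type*} [Fintype I] {a b : ℕ}
    (Φ : Matrix (Fin a) (Fin a) ℂ →ₗ[ℂ] Matrix (Fin b) (Fin b) ℂ)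
    (X : Matrix (I × Fin a) (I × Fin a) ℂ) : Matrix (I × Fin b) (I × Fin b) ℂ :=
  Matrix.of fun p q => Φ (Matrix.of fun s t => X (p.1, s) (q.1, t)) p.2 q.2

/-- The trace norm `‖X‖_tr = Tr √(X^* X)`. -/
noncomputable def trNorm {I : Type*} [Fintype I] [DecidableEq I] (X : Matrix I I ℂ) : ℝ :=
  (((Matrix.posSemidef_conjTranspose_mul_self X).1.eigenvectorUnitary : Matrix I I ℂ) *
    Matrix.diagonal (((↑) : ℝ → ℂ) ∘ Real.sqrt ∘ (Matrix.posSemidef_conjTranspose_mul_self X).1.eigenvalues) *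
    (star (Matrix.posSemidef_conjTranspose_mul_self X).1.eigenvectorUnitary : Matrix I I ℂ)).trace.re

end
lemma inprod_eq {I : Type*} [Fintype I] (v w : I → ℂ) : inprod v w = star v ⬝ᵥ w := rfl

lemma dot_conj_step {a b : Type*} [Fintype a] [Fintype b]
    (M : Matrix a b ℂ) (X : Matrix b b ℂ) (u : a → ℂ) :
    star u ⬝ᵥ (M * X * Mᴴ) *ᵥ u = star (Mᴴ *ᵥ u) ⬝ᵥ X *ᵥ (Mᴴ *ᵥ u) := by
  rw [star_mulVec, conjTranspose_conjTranspose, ← mulVec_mulVec, ← mulVec_mulVec,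
    dotProduct_mulVec (star u) M, dotProduct_mulVec, dotProduct_mulVec]

lemma kron_adj_mulVec {m n k : ℕ} (A : Matrix (Fin k) (Fin n) ℂ)
    (u : Fin m × Fin k → ℂ) (i : Fin m) (j : Fin n) :
    ((((1 : Matrix (Fin m) (Fin m) ℂ) ⊗ₖ A)ᴴ) *ᵥ u) (i, j)
      = ∑ s, (starRingEnd ℂ) (A s j) * u (i, s) := by
  rw [Matrix.mulVec, dotProduct, Fintype.sum_prod_type]
  rw [Finset.sum_eq_single i]
  · apply Finset.sum_congr rfl
    intro s _
    simp [Matrix.conjTranspose_apply, Matrix.kroneckerMap_apply, Matrix.one_apply]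
  · intro p _ hp
    apply Finset.sum_eq_zero
    intro s _
    simp [Matrix.conjTranspose_apply, Matrix.kroneckerMap_apply, Matrix.one_apply, hp]
  · intro h; exact absurd (Finset.mem_univ i) h

lemma schmidtRank_kron_le {m n k : ℕ} (A : Matrix (Fin k) (Fin n) ℂ) (u : Fin m × Fin k → ℂ) :
    SchmidtRank ((((1 : Matrix (Fin m) (Fin m) ℂ) ⊗ₖ A)ᴴ) *ᵥ u) ≤ k := by
  unfold SchmidtRank
  have heq : (Matrix.of fun i j => ((((1 : Matrix (Fin m) (Fin m) ℂ) ⊗ₖ A)ᴴ) *ᵥ u) (i, j))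
      = (Matrix.of fun i s => u (i, s)) * (A.map (starRingEnd ℂ)) := by
    ext i j
    rw [Matrix.of_apply, kron_adj_mulVec, Matrix.mul_apply]
    exact Finset.sum_congr rfl fun s _ => by simp [mul_comm]
  rw [heq]
  exact le_trans (Matrix.rank_mul_le_right _ _)
    (le_trans (Matrix.rank_le_card_height _) (by simp))

lemma exists_coisometry_factor {m n k : ℕ} (hkn : k ≤ n)
    (V : Matrix (Fin m) (Fin n) ℂ) (hr : V.rank ≤ k) :
    ∃ (B : Matrix (Fin k) (Fin n) ℂ) (W : Matrix (Fin m) (Fin k) ℂ),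
      B * Bᴴ = 1 ∧ V = W * B := by
  classical
  set P : Matrix (Fin n) (Fin n) ℂ := Vᴴ * V with hPdef
  have hP : P.IsHermitian := isHermitian_conjTranspose_mul_self V
  set d : Fin n → ℝ := hP.eigenvalues with hd
  set s : Finset (Fin n) := Finset.univ.filter (fun i => d i ≠ 0) with hs
  have hscard : s.card ≤ k := by
    have h1 : P.rank = Fintype.card {i // d i ≠ 0} := hP.rank_eq_card_non_zero_eigs
    have h2 : P.rank = V.rank := rank_conjTranspose_mul_self V
    have h3 : Fintype.card {i // d i ≠ 0} = s.card := Fintype.card_subtype _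
    omega
  obtain ⟨t, hst, htcard⟩ := Finset.exists_superset_card_eq hscard (by simpa using hkn)
  have hd0 : ∀ x, x ∉ t → d x = 0 := by
    intro x hx
    by_contra hne
    exact hx (hst (by simp [hs, hne]))
  set e : Fin k ≃ t := (t.equivFinOfCardEq htcard).symm with he
  set g : Fin k → Fin n := fun j => (e j : Fin n) with hg
  have hginj : Function.Injective g := fun a b hab => e.injective (Subtype.ext hab)
  have hgrange : ∀ x : Fin n, x ∈ t → ∃ j, g j = x := by
    intro x hx
    exact ⟨e.symm ⟨x, hx⟩, by simp [hg]⟩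
  set U : Matrix (Fin n) (Fin n) ℂ := (hP.eigenvectorUnitary : Matrix (Fin n) (Fin n) ℂ) with hU
  have hU1 : Uᴴ * U = 1 := by
    simpa [hU, star_eq_conjTranspose] using (Unitary.coe_star_mul_self hP.eigenvectorUnitary)
  have hU2 : U * Uᴴ = 1 := by
    simpa [hU, star_eq_conjTranspose] using (Unitary.coe_mul_star_self hP.eigenvectorUnitary)
  set D : Matrix (Fin n) (Fin n) ℂ := diagonal (RCLike.ofReal ∘ d) with hD
  have hspec : P = U * D * Uᴴ := by
    simpa [hU, hD, star_eq_conjTranspose] using hP.spectral_theorem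
  set B : Matrix (Fin k) (Fin n) ℂ := Uᴴ.submatrix g id with hB
  have hBH : Bᴴ = U.submatrix id g := by
    simp [hB, conjTranspose_submatrix]
  have hBB : B * Bᴴ = 1 := by
    rw [hB, hBH]
    have : Uᴴ.submatrix g id * U.submatrix id g
        = (Uᴴ * U).submatrix g g := by
      have := submatrix_mul_equiv Uᴴ U g (Equiv.refl (Fin n)) g
      simpa using this
    rw [this, hU1]
    ext i j
    simp [one_apply, hginj.eq_iff]
  refine ⟨B, V * Bᴴ, hBB, ?_⟩
  -- key: D.submatrix id g * B = D * Uᴴ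
  have hkey : D.submatrix id g * B = D * Uᴴ := by
    ext x y
    rw [mul_apply]
    have hrhs : (D * Uᴴ) x y = (d x : ℂ) * Uᴴ x y := by
      simp [hD, diagonal_mul]
    rw [hrhs]
    by_cases hx : x ∈ t
    · obtain ⟨j₀, hj₀⟩ := hgrange x hx
      rw [Finset.sum_eq_single j₀]
      · simp [hB, hD, submatrix_apply, diagonal_apply, hj₀]
      · intro b _ hb
        have : x ≠ g b := by
          intro hxe; exact hb (hginj (by rw [← hxe, hj₀]))
        simp [hD, submatrix_apply, diagonal_apply, this]
      · intro h; exact absurd (Finset.mem_univ j₀) h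
    · have hdx : d x = 0 := hd0 x hx
      rw [Finset.sum_eq_zero, hdx]
      · simp
      · intro b _
        rcases eq_or_ne x (g b) with h | h
        · simp [hD, diagonal_apply, ← h, hdx]
        · simp [hD, diagonal_apply, h]
  have hPB : P * (Bᴴ * B) = P := by
    have h1 : Uᴴ * Bᴴ = (1 : Matrix (Fin n) (Fin n) ℂ).submatrix id g := by
      rw [hBH]
      have := submatrix_mul_equiv Uᴴ U (id : Fin n → Fin n) (Equiv.refl (Fin n)) g
      simpa [hU1] using this
    have h2 : D * ((1 : Matrix (Fin n) (Fin n) ℂ).submatrix id g) = D.submatrix id g := by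
      have := mul_submatrix_one (Equiv.refl (Fin n)) g D
      simpa using this
    rw [hspec]
    calc U * D * Uᴴ * (Bᴴ * B)
        = U * (D * (Uᴴ * Bᴴ) * B) := by simp only [Matrix.mul_assoc]
      _ = U * (D.submatrix id g * B) := by rw [h1, h2]
      _ = U * (D * Uᴴ) := by rw [hkey]
      _ = U * D * Uᴴ := by rw [Matrix.mul_assoc]
  have hVB : V * (Bᴴ * B) = V := by
    have hz : (Vᴴ * V) * (Bᴴ * B - 1) = 0 := by
      rw [Matrix.mul_sub, Matrix.mul_one, ← hPdef, hPB, sub_self]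
    have := (conjTranspose_mul_self_mul_eq_zero V (Bᴴ * B - 1)).mp hz
    rw [Matrix.mul_sub, Matrix.mul_one, sub_eq_zero] at this
    exact this
  rw [Matrix.mul_assoc, hVB]

/-- Theorem 4.3(a): the cone `C_m^{min,k}` is exactly the cone of `k`-block positive operators. -/
theorem mem_kSuperMinimal_cone_iff_kBlockPos (m n k : ℕ) (hm : 0 < m) (hn : 0 < n)
    (hk : 0 < k) (hkn : k ≤ n)
    (X : Matrix (Fin m × Fin n) (Fin m × Fin n) ℂ) (hX : X.IsHermitian) :
    (∀ (N : ℕ) (A : Fin N → Matrix (Fin k) (Fin n) ℂ),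
        (∑ i, A i * (A i)ᴴ) = 1 →
        (∑ i, ((1 : Matrix (Fin m) (Fin m) ℂ) ⊗ₖ A i) * X *
          (((1 : Matrix (Fin m) (Fin m) ℂ) ⊗ₖ A i)ᴴ)).PosSemidef)
      ↔ kBlockPos k X := by
  constructor
  · intro h
    refine ⟨hX, fun v hv => ?_⟩
    obtain ⟨B, W, hBB, hVW⟩ :=
      exists_coisometry_factor hkn (Matrix.of fun i j => v (i, j)) hv
    set A : Matrix (Fin k) (Fin n) ℂ := B.map (starRingEnd ℂ) with hA
    have hAH : Aᴴ = Bᴴ.map (starRingEnd ℂ) :=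
      Matrix.conjTranspose_map _ (fun a => by simp)
    have hAA : A * Aᴴ = 1 := by
      rw [hA, hAH, ← Matrix.map_mul, hBB]
      ext i j
      simp [Matrix.one_apply, apply_ite]
    have hps := h 1 (fun _ => A) (by simpa using hAA)
    set u : Fin m × Fin k → ℂ := fun p => W p.1 p.2 with hu
    have h0 := hps.dotProduct_mulVec_nonneg u
    rw [Fin.sum_univ_one, dot_conj_step] at h0
    have hw : ((((1 : Matrix (Fin m) (Fin m) ℂ) ⊗ₖ A)ᴴ) *ᵥ u) = v := by
      funext p
      obtain ⟨i, j⟩ := p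
      rw [kron_adj_mulVec]
      have hv' : v (i, j) = (W * B) i j := by rw [← hVW]; rfl
      rw [hv', Matrix.mul_apply]
      exact Finset.sum_congr rfl fun s _ => by simp [hA, hu, mul_comm]
    rw [hw] at h0
    rw [inprod_eq]
    exact h0
  · rintro ⟨hH, hpos⟩ N A hA
    rw [Matrix.posSemidef_iff_dotProduct_mulVec]
    constructor
    · rw [Matrix.IsHermitian, Matrix.conjTranspose_sum]
      exact Finset.sum_congr rfl fun i _ =>
        (Matrix.isHermitian_mul_mul_conjTranspose _ hX)
    · intro x
      have h1 : (∑ i, ((1 : Matrix (Fin m) (Fin m) ℂ) ⊗ₖ A i) * X *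
            (((1 : Matrix (Fin m) (Fin m) ℂ) ⊗ₖ A i)ᴴ)) *ᵥ x
          = ∑ i, (((1 : Matrix (Fin m) (Fin m) ℂ) ⊗ₖ A i) * X *
            (((1 : Matrix (Fin m) (Fin m) ℂ) ⊗ₖ A i)ᴴ)) *ᵥ x := by
        ext j
        simp only [Matrix.mulVec, dotProduct, Matrix.sum_apply, Finset.sum_mul,
          Finset.sum_apply]
        exact Finset.sum_comm
      have h2 : ∀ w : Fin N → (Fin m × Fin k → ℂ),
          star x ⬝ᵥ (∑ i, w i) = ∑ i, star x ⬝ᵥ w i := by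
        intro w
        simp only [dotProduct, Finset.sum_apply, Finset.mul_sum]
        exact Finset.sum_comm
      rw [h1, h2]
      refine Finset.sum_nonneg fun i _ => ?_
      rw [dot_conj_step, ← inprod_eq]
      exact hpos _ (schmidtRank_kron_le (A i) x)
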